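/- arXiv:1909.13464 — 2 statements merged into one kernel-verified Lean document; each statement's English description precedes it below -/
import Mathlib

section
/- Lemma 1 (restricted eigenvalue condition holds with probability tending to one for Gaussian designs). Suppose conditions (A1) and (A2) hold for variable j, and q_j := |supp(β^j)| ≥ 1. Then there is a sequence φ² = φ²_n > 0 with liminf_{n→∞} φ² = κ² > 0 such that, with probability tending to one as n → ∞, the following holds simultaneously: for every b ∈ ℝ^{p−1}, every index set 𝓘 with |𝓘| ≤ q_j and ‖b_{\𝓘}‖₁ ≤ 3‖b_𝓘‖₁, and every index set 𝒮 with 𝒮 ⊇ 𝓘, |𝒮| ≤ 2q_j and ‖b_{\𝒮}‖_∞ ≤ min_{k ∈ 𝒮\𝓘}|b_k|, one has ‖b_𝒮‖₂² ≤ (1/φ²) · b⊤ Σ̂_{(\j,\j)} b, where Σ̂_{(\j,\j)} := X_{\j}⊤ X_{\j} / n. -/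
open MeasureTheory ProbabilityTheory Filter Matrix
open scoped ENNReal NNReal


set_option maxHeartbeats 1000000

section AuxREC
open Real
open scoped ENNReal NNReal

lemma gauss_sq_exp (v : NNReal) {t : ℝ} (ht : 2 * t * (v:ℝ) < 1) :
    Integrable (fun x => Real.exp (t * x ^ 2)) (gaussianReal 0 v) ∧
    ∫ x, Real.exp (t * x ^ 2) ∂(gaussianReal 0 v) = (Real.sqrt (1 - 2 * t * v))⁻¹ := by
  rcases eq_or_ne v 0 with hv | hv
  · subst hv
    simp only [gaussianReal_zero_var, NNReal.coe_zero, mul_zero, sub_zero, Real.sqrt_one,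
      inv_one]
    refine ⟨(integrable_const (1:ℝ)).congr ?_, by simp⟩
    rw [Filter.EventuallyEq, ae_dirac_eq]
    simp
  · have hV : (0:ℝ) < (v:ℝ) := by positivity
    have hb : (0:ℝ) < 1 / (2 * (v:ℝ)) - t := by
      rw [sub_pos, lt_div_iff₀ (by positivity)]
      linarith [ht]
    set b : ℝ := 1 / (2 * (v:ℝ)) - t with hbdef
    have hpt : ∀ x : ℝ, gaussianPDFReal 0 v x * Real.exp (t * x ^ 2)
        = (Real.sqrt (2 * π * v))⁻¹ * Real.exp (-b * x ^ 2) := by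
      intro x
      rw [gaussianPDFReal, mul_assoc, ← Real.exp_add]
      congr 2
      rw [hbdef]
      ring
    have hmeas : Measurable fun x => (gaussianPDFReal 0 v x).toNNReal :=
      (measurable_gaussianPDFReal 0 v).real_toNNReal
    have hgr : gaussianReal 0 v = volume.withDensity
        (fun x => (((gaussianPDFReal 0 v x).toNNReal : ℝ≥0) : ℝ≥0∞)) := by
      rw [gaussianReal_of_var_ne_zero 0 hv]
      rfl
    have hsmul : ∀ x : ℝ, (gaussianPDFReal 0 v x).toNNReal • Real.exp (t * x ^ 2)
        = (Real.sqrt (2 * π * v))⁻¹ * Real.exp (-b * x ^ 2) := by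
      intro x
      rw [NNReal.smul_def, smul_eq_mul, Real.coe_toNNReal _ (gaussianPDFReal_nonneg 0 v x)]
      exact hpt x
    have hint2 : Integrable (fun x => (gaussianPDFReal 0 v x).toNNReal • Real.exp (t * x ^ 2))
        volume := by
      refine (Integrable.congr ((integrable_exp_neg_mul_sq hb).const_mul
        ((Real.sqrt (2 * π * v))⁻¹)) ?_)
      exact Filter.Eventually.of_forall fun x => (hsmul x).symm
    have hInt : Integrable (fun x => Real.exp (t * x ^ 2)) (gaussianReal 0 v) := by
      rw [hgr, integrable_withDensity_iff_integrable_smul hmeas]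
      exact hint2
    refine ⟨hInt, ?_⟩
    rw [hgr, integral_withDensity_eq_integral_smul hmeas]
    calc ∫ x, (gaussianPDFReal 0 v x).toNNReal • Real.exp (t * x ^ 2)
        = ∫ x, (Real.sqrt (2 * π * v))⁻¹ * Real.exp (-b * x ^ 2) := by
          exact integral_congr_ae (Filter.Eventually.of_forall hsmul)
      _ = (Real.sqrt (2 * π * v))⁻¹ * ∫ x, Real.exp (-b * x ^ 2) := by
          rw [integral_const_mul]
      _ = (Real.sqrt (2 * π * v))⁻¹ * Real.sqrt (π / b) := by rw [integral_gaussian]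
      _ = (Real.sqrt (1 - 2 * t * v))⁻¹ := by
          have h1 : (1:ℝ) - 2 * t * (v:ℝ) = 2 * (v:ℝ) * b := by rw [hbdef]; field_simp
          rw [← Real.sqrt_inv, ← Real.sqrt_inv, ← Real.sqrt_mul (by positivity)]
          congr 1
          rw [h1]
          field_simp

lemma neg_log_one_sub_le {x : ℝ} (h0 : 0 ≤ x) (h2 : x ≤ 1/2) :
    -Real.log (1 - x) ≤ x + 2 * x ^ 2 := by
  have h1 : (0:ℝ) < 1 - x := by linarith
  have h3 := Real.log_le_sub_one_of_pos (inv_pos.mpr h1)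
  rw [Real.log_inv] at h3
  have h4 : (1 - x)⁻¹ * (1 - x) = 1 := inv_mul_cancel₀ h1.ne'
  nlinarith [h3, h4, sq_nonneg x, pow_nonneg h0 3]

lemma neg_log_one_add_le {x : ℝ} (h0 : 0 ≤ x) :
    -Real.log (1 + x) ≤ -x + x ^ 2 := by
  have h1 : (0:ℝ) < 1 + x := by linarith
  have h3 := Real.log_le_sub_one_of_pos (inv_pos.mpr h1)
  rw [Real.log_inv] at h3
  have h4 : (1 + x)⁻¹ * (1 + x) = 1 := inv_mul_cancel₀ h1.ne'
  nlinarith [h3, h4, pow_nonneg h0 3]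

lemma map_sq_exp {Ω : Type*} [MeasurableSpace Ω] (μ : Measure Ω) (A : Ω → ℝ)
    (hA : Measurable A) (v : NNReal) (hmap : Measure.map A μ = gaussianReal 0 v)
    {t : ℝ} (ht : 2 * t * (v:ℝ) < 1) :
    Integrable (fun ω => Real.exp (t * A ω ^ 2)) μ ∧
    ∫ ω, Real.exp (t * A ω ^ 2) ∂μ = (Real.sqrt (1 - 2 * t * v))⁻¹ := by
  have hcont : Continuous fun x : ℝ => Real.exp (t * x ^ 2) := by continuity
  have h := gauss_sq_exp v ht
  constructor
  · have := (integrable_map_measure (hcont.aestronglyMeasurable) hA.aemeasurable).mp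
      (by rw [hmap]; exact h.1)
    exact this
  · rw [← h.2, ← hmap, integral_map hA.aemeasurable hcont.aestronglyMeasurable]

lemma mgf_pair_bound {Ω : Type*} [MeasurableSpace Ω] (μ : Measure Ω) [IsProbabilityMeasure μ]
    (A B : Ω → ℝ) (hA : Measurable A) (hB : Measurable B)
    (vA vB : NNReal) (hmA : Measure.map A μ = gaussianReal 0 vA)
    (hmB : Measure.map B μ = gaussianReal 0 vB)
    (hvA : (vA:ℝ) ≤ 4) (hvB : (vB:ℝ) ≤ 4)
    {s : ℝ} (hs0 : 0 < s) (hs : s ≤ 1/8) :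
    Integrable (fun ω => Real.exp (s * ((A ω ^ 2 - B ω ^ 2)/4 - ((vA:ℝ) - (vB:ℝ))/4))) μ ∧
    ∫ ω, Real.exp (s * ((A ω ^ 2 - B ω ^ 2)/4 - ((vA:ℝ) - (vB:ℝ))/4)) ∂μ
      ≤ Real.exp (12 * s ^ 2) := by
  have hvA0 : (0:ℝ) ≤ (vA:ℝ) := vA.coe_nonneg
  have hvB0 : (0:ℝ) ≤ (vB:ℝ) := vB.coe_nonneg
  set f : Ω → ℝ := fun ω => Real.exp (s/4 * A ω ^ 2) with hf
  set g : Ω → ℝ := fun ω => Real.exp (-(s/4) * B ω ^ 2) with hg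
  set c : ℝ := Real.exp (-(s * (((vA:ℝ) - (vB:ℝ))/4))) with hc
  have hpt : (fun ω => Real.exp (s * ((A ω ^ 2 - B ω ^ 2)/4 - ((vA:ℝ) - (vB:ℝ))/4)))
      = fun ω => c * (f ω * g ω) := by
    funext ω
    rw [hf, hg, hc, ← Real.exp_add, ← Real.exp_add]
    congr 1
    ring
  -- integrability of f (as L¹): t = s/4
  have hintf : Integrable f μ :=
    (map_sq_exp μ A hA vA hmA (t := s/4) (by nlinarith)).1
  -- ∫ f² and ∫ g²
  have hf2 := map_sq_exp μ A hA vA hmA (t := s/2) (by nlinarith)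
  have hg2 := map_sq_exp μ B hB vB hmB (t := -(s/2)) (by nlinarith)
  have hfsq : (fun ω => f ω ^ 2) = fun ω => Real.exp (s/2 * A ω ^ 2) := by
    funext ω; rw [hf, sq, ← Real.exp_add]; congr 1; ring
  have hgsq : (fun ω => g ω ^ 2) = fun ω => Real.exp (-(s/2) * B ω ^ 2) := by
    funext ω; rw [hg, sq, ← Real.exp_add]; congr 1; ring
  have hfmeas : Measurable f := by fun_prop
  have hgmeas : Measurable g := by fun_prop
  have hfL2 : MemLp f 2 μ := by
    rw [memLp_two_iff_integrable_sq hfmeas.aestronglyMeasurable, hfsq]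
    exact hf2.1
  have hgL2 : MemLp g 2 μ := by
    rw [memLp_two_iff_integrable_sq hgmeas.aestronglyMeasurable, hgsq]
    exact hg2.1
  have hgbdd : ∀ ω, ‖g ω‖ ≤ 1 := by
    intro ω
    rw [hg, Real.norm_eq_abs, abs_of_pos (Real.exp_pos _)]
    refine Real.exp_le_one_iff.mpr ?_    -- maybe wrong name
    nlinarith [sq_nonneg (B ω)]
  have hintfg : Integrable (fun ω => g ω * f ω) μ :=
    Integrable.bdd_mul hintf hgmeas.aestronglyMeasurable (Filter.Eventually.of_forall hgbdd)
  have hint : Integrable (fun ω => Real.exp (s * ((A ω ^ 2 - B ω ^ 2)/4 - ((vA:ℝ) - (vB:ℝ))/4))) μ := by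
    rw [hpt]
    refine Integrable.const_mul ?_ c
    exact hintfg.congr (Filter.Eventually.of_forall fun ω => by ring)
  refine ⟨hint, ?_⟩
  -- Cauchy–Schwarz
  have hpq : Real.HolderConjugate 2 2 := by
    exact Real.HolderConjugate.two_two
  have hCS := integral_mul_le_Lp_mul_Lq_of_nonneg hpq
    (f := f) (g := g) (μ := μ)
    (Filter.Eventually.of_forall fun ω => (Real.exp_pos _).le)
    (Filter.Eventually.of_forall fun ω => (Real.exp_pos _).le)
    (by simpa using hfL2) (by simpa using hgL2)
  set xA : ℝ := s * (vA:ℝ) with hxA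
  set xB : ℝ := s * (vB:ℝ) with hxB
  have hxA0 : 0 ≤ xA := by positivity
  have hxB0 : 0 ≤ xB := by positivity
  have hxA2 : xA ≤ 1/2 := by rw [hxA]; nlinarith
  have h1A : (0:ℝ) < 1 - xA := by linarith
  have h1B : (0:ℝ) < 1 + xB := by linarith
  have hIf : ∫ ω, f ω ^ (2:ℝ) ∂μ = (Real.sqrt (1 - xA))⁻¹ := by
    have : (fun ω => f ω ^ (2:ℝ)) = fun ω => Real.exp (s/2 * A ω ^ 2) := by
      funext ω; rw [Real.rpow_two]; exact congrFun hfsq ω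
    rw [this, hf2.2]
    congr 2
    rw [hxA]; ring
  have hIg : ∫ ω, g ω ^ (2:ℝ) ∂μ = (Real.sqrt (1 + xB))⁻¹ := by
    have : (fun ω => g ω ^ (2:ℝ)) = fun ω => Real.exp (-(s/2) * B ω ^ 2) := by
      funext ω; rw [Real.rpow_two]; exact congrFun hgsq ω
    rw [this, hg2.2]
    congr 2
    rw [hxB]; ring
  have hApow : ((Real.sqrt (1 - xA))⁻¹) ^ ((1:ℝ)/2)
      = Real.exp (Real.log (1 - xA) * (-(1/4))) := by
    rw [Real.sqrt_eq_rpow, ← Real.rpow_neg h1A.le, ← Real.rpow_mul h1A.le,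
      Real.rpow_def_of_pos h1A]
    norm_num
  have hBpow : ((Real.sqrt (1 + xB))⁻¹) ^ ((1:ℝ)/2)
      = Real.exp (Real.log (1 + xB) * (-(1/4))) := by
    rw [Real.sqrt_eq_rpow, ← Real.rpow_neg h1B.le, ← Real.rpow_mul h1B.le,
      Real.rpow_def_of_pos h1B]
    norm_num
  have lA := neg_log_one_sub_le hxA0 hxA2
  have lB := neg_log_one_add_le hxB0
  have hfinal : c * (((Real.sqrt (1 - xA))⁻¹) ^ ((1:ℝ)/2) * ((Real.sqrt (1 + xB))⁻¹) ^ ((1:ℝ)/2))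
      ≤ Real.exp (12 * s ^ 2) := by
    rw [hApow, hBpow, hc, ← Real.exp_add, ← Real.exp_add, Real.exp_le_exp]
    have hxAle : xA ≤ 4 * s := by rw [hxA]; nlinarith
    have hxBle : xB ≤ 4 * s := by rw [hxB]; nlinarith
    have hA2 : xA ^ 2 ≤ 16 * s ^ 2 := by nlinarith
    have hB2 : xB ^ 2 ≤ 16 * s ^ 2 := by nlinarith
    have hm : s * (((vA:ℝ) - (vB:ℝ))/4) = xA/4 - xB/4 := by rw [hxA, hxB]; ring
    linarith [lA, lB, hA2, hB2, hm]
  calc ∫ ω, Real.exp (s * ((A ω ^ 2 - B ω ^ 2)/4 - ((vA:ℝ) - (vB:ℝ))/4)) ∂μ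
      = c * ∫ ω, f ω * g ω ∂μ := by
        rw [hpt, integral_const_mul]
    _ ≤ c * (((Real.sqrt (1 - xA))⁻¹) ^ ((1:ℝ)/2) * ((Real.sqrt (1 + xB))⁻¹) ^ ((1:ℝ)/2)) := by
        refine mul_le_mul_of_nonneg_left ?_ (Real.exp_pos _).le
        rw [← hIf, ← hIg]
        exact hCS
    _ ≤ Real.exp (12 * s ^ 2) := hfinal

lemma chernoff_entry {Ωt : Type*} [MeasureSpace Ωt] [IsProbabilityMeasure (volume : Measure Ωt)]
    {n pn : ℕ} (X : Ωt → Matrix (Fin n) (Fin pn) ℝ)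
    (hXik : ∀ i k, Measurable fun ω => X ω i k)
    (Sg : Matrix (Fin pn) (Fin pn) ℝ) (hsymm : Sg.IsSymm) (hdiag : ∀ k, Sg k k = 1)
    (hpos : ∀ a : Fin pn → ℝ, 0 ≤ a ⬝ᵥ Sg.mulVec a)
    (hGauss : ∀ (i : Fin n) (a : Fin pn → ℝ),
      Measure.map (fun ω => ∑ r, a r * X ω i r) volume
        = gaussianReal 0 (Real.toNNReal (a ⬝ᵥ Sg.mulVec a)))
    (hRows : iIndepFun
      (fun (i : Fin n) (ω : Ωt) (r : Fin pn) => X ω i r) volume)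
    (k l : Fin pn) (u : ℝ) (hu : u = 1 ∨ u = -1) {t : ℝ} (ht0 : 0 < t) (ht3 : t ≤ 3) :
    (volume {ω : Ωt | (n:ℝ) * t ≤ ∑ i : Fin n, (u * (X ω i k * X ω i l) - u * Sg k l)}).toReal
      ≤ Real.exp (-(n:ℝ) * t ^ 2 / 48) := by
  classical
  have u2 : u * u = 1 := by rcases hu with h | h <;> rw [h] <;> norm_num
  set σ : ℝ := Sg k l with hσ
  have hlk : Sg l k = σ := hsymm.apply k l
  -- the two linear functionals
  set a : Fin pn → ℝ := fun r => (if r = k then (1:ℝ) else 0) + (if r = l then u else 0) with ha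
  set bv : Fin pn → ℝ := fun r => (if r = k then (1:ℝ) else 0) + (if r = l then -u else 0) with hbv
  have hsum : ∀ (f : Fin pn → ℝ) (c d : ℝ),
      (∑ r, ((if r = k then c else 0) + (if r = l then d else 0)) * f r) = c * f k + d * f l := by
    intro f c d
    simp [add_mul, ite_mul, Finset.sum_add_distrib]
  have hsum2 : ∀ (f : Fin pn → ℝ) (c d : ℝ),
      (∑ r, f r * ((if r = k then c else 0) + (if r = l then d else 0))) = f k * c + f l * d := by
    intro f c d
    simp [mul_add, mul_ite, Finset.sum_add_distrib]
  have hquad : ∀ c d : ℝ,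
      (fun r => (if r = k then c else 0) + (if r = l then d else 0)) ⬝ᵥ
        Sg.mulVec (fun r => (if r = k then c else 0) + (if r = l then d else 0))
      = c * (Sg k k * c + Sg k l * d) + d * (Sg l k * c + Sg l l * d) := by
    intro c d
    rw [dotProduct]
    have hmv : ∀ r, Sg.mulVec (fun r' => (if r' = k then c else 0) + (if r' = l then d else 0)) r
        = Sg r k * c + Sg r l * d := by
      intro r
      rw [mulVec, dotProduct]
      exact hsum2 (fun r' => Sg r r') c d
    calc (∑ r, ((if r = k then c else 0) + (if r = l then d else 0)) *
            Sg.mulVec (fun r' => (if r' = k then c else 0) + (if r' = l then d else 0)) r)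
        = ∑ r, ((if r = k then c else 0) + (if r = l then d else 0)) *
            (Sg r k * c + Sg r l * d) := by
          refine Finset.sum_congr rfl fun r _ => ?_
          rw [hmv r]
      _ = c * (Sg k k * c + Sg k l * d) + d * (Sg l k * c + Sg l l * d) :=
          hsum (fun r => Sg r k * c + Sg r l * d) c d
  have hva : a ⬝ᵥ Sg.mulVec a = 2 + 2 * (u * σ) := by
    rw [ha, hquad 1 u, hdiag, hdiag, hlk, ← hσ]
    nlinarith [u2]
  have hvb : bv ⬝ᵥ Sg.mulVec bv = 2 - 2 * (u * σ) := by
    rw [hbv, hquad 1 (-u), hdiag, hdiag, hlk, ← hσ]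
    nlinarith [u2]
  have hva0 : 0 ≤ 2 + 2 * (u * σ) := hva ▸ hpos a
  have hvb0 : 0 ≤ 2 - 2 * (u * σ) := hvb ▸ hpos bv
  set vA : NNReal := Real.toNNReal (a ⬝ᵥ Sg.mulVec a) with hvA
  set vB : NNReal := Real.toNNReal (bv ⬝ᵥ Sg.mulVec bv) with hvB
  have hvAR : (vA:ℝ) = 2 + 2 * (u * σ) := by
    rw [hvA, hva, Real.coe_toNNReal _ hva0]
  have hvBR : (vB:ℝ) = 2 - 2 * (u * σ) := by
    rw [hvB, hvb, Real.coe_toNNReal _ hvb0]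
  have hvA4 : (vA:ℝ) ≤ 4 := by rw [hvAR]; linarith
  have hvB4 : (vB:ℝ) ≤ 4 := by rw [hvBR]; linarith
  -- A and B functions
  set Af : Fin n → Ωt → ℝ := fun i ω => X ω i k + u * X ω i l with hAf
  set Bf : Fin n → Ωt → ℝ := fun i ω => X ω i k - u * X ω i l with hBf
  have hAfeq : ∀ i, (fun ω => ∑ r, a r * X ω i r) = Af i := by
    intro i; funext ω
    rw [ha, hsum (fun r => X ω i r) 1 u]; ring
  have hBfeq : ∀ i, (fun ω => ∑ r, bv r * X ω i r) = Bf i := by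
    intro i; funext ω
    rw [hbv, hsum (fun r => X ω i r) 1 (-u)]; ring
  have hmapA : ∀ i, Measure.map (Af i) volume = gaussianReal 0 vA := by
    intro i; rw [← hAfeq i, hGauss i a, hvA]
  have hmapB : ∀ i, Measure.map (Bf i) volume = gaussianReal 0 vB := by
    intro i; rw [← hBfeq i, hGauss i bv, hvB]
  have hAmeas : ∀ i, Measurable (Af i) := fun i => ((hXik i k).add ((hXik i l).const_mul u))
  have hBmeas : ∀ i, Measurable (Bf i) := fun i => ((hXik i k).sub ((hXik i l).const_mul u))
  -- the summands
  set Z : Fin n → Ωt → ℝ := fun i ω => u * (X ω i k * X ω i l) - u * σ with hZ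
  have hZmeas : ∀ i, Measurable (Z i) := by
    intro i
    exact (((hXik i k).mul (hXik i l)).const_mul u).sub measurable_const
  have hkey : ∀ i ω, Z i ω = ((Af i ω) ^ 2 - (Bf i ω) ^ 2)/4 - ((vA:ℝ) - (vB:ℝ))/4 := by
    intro i ω
    rw [hZ, hAf, hBf, hvAR, hvBR]
    ring
  set s : ℝ := t / 24 with hs
  have hs0 : 0 < s := by rw [hs]; linarith
  have hs8 : s ≤ 1/8 := by rw [hs]; linarith
  have hmgf : ∀ i : Fin n, Integrable (fun ω => Real.exp (s * Z i ω)) volume ∧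
      mgf (Z i) volume s ≤ Real.exp (12 * s ^ 2) := by
    intro i
    have h := mgf_pair_bound volume (Af i) (Bf i) (hAmeas i) (hBmeas i) vA vB
      (hmapA i) (hmapB i) hvA4 hvB4 hs0 hs8
    have hfun : (fun ω => Real.exp (s * ((Af i ω ^ 2 - Bf i ω ^ 2)/4 - ((vA:ℝ) - (vB:ℝ))/4)))
        = fun ω => Real.exp (s * Z i ω) := by
      funext ω; rw [hkey i ω]
    constructor
    · rw [← hfun]; exact h.1
    · rw [mgf]
      calc ∫ ω, Real.exp (s * Z i ω) ∂volume
          = ∫ ω, Real.exp (s * ((Af i ω ^ 2 - Bf i ω ^ 2)/4 - ((vA:ℝ) - (vB:ℝ))/4)) ∂volume := by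
            rw [hfun]
        _ ≤ Real.exp (12 * s ^ 2) := h.2
  -- independence
  have hZindep : iIndepFun Z volume := by
    have := hRows.comp (fun i (w : Fin pn → ℝ) => u * (w k * w l) - u * σ)
      (fun i => by fun_prop)
    exact this
  -- Chernoff
  have hint_sum : Integrable (fun ω => Real.exp (s * (∑ i, Z i) ω)) volume :=
    hZindep.integrable_exp_mul_sum hZmeas (fun i _ => (hmgf i).1)
  have hch := measure_ge_le_exp_mul_mgf (μ := volume) (X := ∑ i, Z i) ((n:ℝ) * t)
    hs0.le hint_sum
  have hseteq : {ω : Ωt | (n:ℝ) * t ≤ ∑ i : Fin n, (u * (X ω i k * X ω i l) - u * Sg k l)}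
      = {ω : Ωt | (n:ℝ) * t ≤ (∑ i, Z i) ω} := by
    ext ω
    simp only [Set.mem_setOf_eq, Finset.sum_apply, hZ, hσ]
  rw [hseteq]
  refine hch.trans ?_
  rw [hZindep.mgf_sum hZmeas Finset.univ]
  calc Real.exp (-s * ((n:ℝ) * t)) * ∏ i : Fin n, mgf (Z i) volume s
      ≤ Real.exp (-s * ((n:ℝ) * t)) * ∏ i : Fin n, Real.exp (12 * s ^ 2) := by
        refine mul_le_mul_of_nonneg_left ?_ (Real.exp_pos _).le
        exact Finset.prod_le_prod (fun i _ => mgf_nonneg) (fun i _ => (hmgf i).2)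
    _ = Real.exp (-s * ((n:ℝ) * t) + (n:ℝ) * (12 * s ^ 2)) := by
        rw [Finset.prod_const, ← Real.exp_nat_mul, ← Real.exp_add, Finset.card_univ,
          Fintype.card_fin]
    _ ≤ Real.exp (-(n:ℝ) * t ^ 2 / 48) := by
        rw [Real.exp_le_exp, hs]
        have hn : (0:ℝ) ≤ (n:ℝ) := Nat.cast_nonneg n
        nlinarith [hn, ht0, sq_nonneg t]

lemma det_re {pn : ℕ} (Sg M : Matrix (Fin pn) (Fin pn) ℝ) {κ t : ℝ} (hκ0 : 0 < κ)
    (hκ : ∀ a : Fin pn → ℝ, κ * ∑ r, a r ^ 2 ≤ a ⬝ᵥ Sg.mulVec a)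
    {qn : ℕ} (hent : ∀ k l, |M k l - Sg k l| ≤ t) (ht0 : 0 ≤ t)
    (hqt : 16 * (qn:ℝ) * t ≤ κ / 2)
    (b : Fin pn → ℝ) (I : Finset (Fin pn)) (hI : I.card ≤ qn)
    (hcone : (∑ r ∈ Iᶜ, |b r|) ≤ 3 * ∑ r ∈ I, |b r|) (S : Finset (Fin pn)) :
    ∑ r ∈ S, b r ^ 2 ≤ (1 / (κ/2)) * (b ⬝ᵥ M.mulVec b) := by
  classical
  set L1 : ℝ := ∑ r, |b r| with hL1
  set T2 : ℝ := ∑ r, b r ^ 2 with hT2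
  have hT20 : 0 ≤ T2 := Finset.sum_nonneg fun r _ => sq_nonneg _
  have hIabs0 : 0 ≤ ∑ r ∈ I, |b r| := Finset.sum_nonneg fun r _ => abs_nonneg _
  have h1 : L1 ≤ 4 * ∑ r ∈ I, |b r| := by
    rw [hL1, ← Finset.sum_add_sum_compl I fun r => |b r|]
    linarith [hcone]
  have h2 : (∑ r ∈ I, |b r|) ^ 2 ≤ (qn:ℝ) * T2 := by
    calc (∑ r ∈ I, |b r|) ^ 2 ≤ (I.card : ℝ) * ∑ r ∈ I, |b r| ^ 2 := by
          exact_mod_cast sq_sum_le_card_mul_sum_sq (s := I) (f := fun r => |b r|)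
      _ ≤ (qn:ℝ) * T2 := by
          refine mul_le_mul (by exact_mod_cast hI) ?_ (Finset.sum_nonneg fun r _ => sq_nonneg _)
            (Nat.cast_nonneg qn)
          calc (∑ r ∈ I, |b r| ^ 2) = ∑ r ∈ I, b r ^ 2 := by
                refine Finset.sum_congr rfl fun r _ => sq_abs _
            _ ≤ T2 := Finset.sum_le_sum_of_subset_of_nonneg (Finset.subset_univ I)
                (fun r _ _ => sq_nonneg _)
  have hL10 : 0 ≤ L1 := Finset.sum_nonneg fun r _ => abs_nonneg _
  have h3 : L1 ^ 2 ≤ 16 * (qn:ℝ) * T2 := by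
    calc L1 ^ 2 ≤ (4 * ∑ r ∈ I, |b r|) ^ 2 := by
          exact pow_le_pow_left₀ hL10 h1 2
      _ = 16 * (∑ r ∈ I, |b r|) ^ 2 := by ring
      _ ≤ 16 * ((qn:ℝ) * T2) := by linarith [h2]
      _ = 16 * (qn:ℝ) * T2 := by ring
  have h4 : |b ⬝ᵥ M.mulVec b - b ⬝ᵥ Sg.mulVec b| ≤ t * L1 ^ 2 := by
    have hdiff : b ⬝ᵥ M.mulVec b - b ⬝ᵥ Sg.mulVec b
        = ∑ r, ∑ r', b r * ((M r r' - Sg r r') * b r') := by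
      rw [dotProduct, dotProduct, ← Finset.sum_sub_distrib]
      refine Finset.sum_congr rfl fun r _ => ?_
      rw [mulVec, mulVec, dotProduct, dotProduct, Finset.mul_sum, Finset.mul_sum,
        ← Finset.sum_sub_distrib]
      refine Finset.sum_congr rfl fun r' _ => ?_
      ring
    rw [hdiff]
    calc |∑ r, ∑ r', b r * ((M r r' - Sg r r') * b r')|
        ≤ ∑ r, |∑ r', b r * ((M r r' - Sg r r') * b r')| := Finset.abs_sum_le_sum_abs _ _
      _ ≤ ∑ r, ∑ r', |b r * ((M r r' - Sg r r') * b r')| := by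
          exact Finset.sum_le_sum fun r _ => Finset.abs_sum_le_sum_abs _ _
      _ ≤ ∑ r, ∑ r', |b r| * (t * |b r'|) := by
          refine Finset.sum_le_sum fun r _ => Finset.sum_le_sum fun r' _ => ?_
          rw [abs_mul, abs_mul]
          exact mul_le_mul_of_nonneg_left
            (mul_le_mul_of_nonneg_right (hent r r') (abs_nonneg _)) (abs_nonneg _)
      _ = t * L1 ^ 2 := by
          simp_rw [← Finset.mul_sum]
          rw [← Finset.sum_mul, ← hL1]
          ring
  have h5 : κ * T2 ≤ b ⬝ᵥ Sg.mulVec b := hκ b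
  have h6 : κ / 2 * T2 ≤ b ⬝ᵥ M.mulVec b := by
    have habs := abs_le.mp h4
    have : t * L1 ^ 2 ≤ κ / 2 * T2 := by
      calc t * L1 ^ 2 ≤ t * (16 * (qn:ℝ) * T2) := by
            exact mul_le_mul_of_nonneg_left h3 ht0
        _ = (16 * (qn:ℝ) * t) * T2 := by ring
        _ ≤ κ / 2 * T2 := mul_le_mul_of_nonneg_right hqt hT20
    linarith [habs.1, h5, this]
  have hS : ∑ r ∈ S, b r ^ 2 ≤ T2 :=
    Finset.sum_le_sum_of_subset_of_nonneg (Finset.subset_univ S) fun r _ _ => sq_nonneg _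
  have hκ2 : (0:ℝ) < κ / 2 := by linarith
  calc ∑ r ∈ S, b r ^ 2 ≤ T2 := hS
    _ ≤ (1 / (κ/2)) * (b ⬝ᵥ M.mulVec b) := by
        rw [one_div]
        exact (le_inv_mul_iff₀ hκ2).mpr h6

end AuxREC

/-- Lemma 1: under (A1) and (A2), with `q_j ≥ 1`, there is a sequence `φ² > 0` with
`liminf φ² = κ² > 0` such that the `(ne_j, q_j, 3)`-restricted eigenvalue condition for
the sample covariance `Σ̂_{(\j,\j)} = X_{\j}⊤X_{\j}/n` holds with probability tending
to one.

Setup: the rows of `X` are i.i.d. `N_p(0, Σ)` with `diag(Σ) = 1` (encoded by the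
independence of the rows together with the Gaussianity of every linear functional of a
row); `β = β^j` is the vector of population regression coefficients of column `j` on
the remaining columns (encoded by `β_j = 0` and the orthogonality of the residual to
the other columns: `Σ_{kj} = (Σβ)_k` for `k ≠ j`); `ne_j = supp(β)`, `q_j = |ne_j|`,
and `λ_j > 0` is the lasso tuning parameter. Vectors `b ∈ ℝ^{p−1}` are encoded as
`b : Fin p → ℝ` with `b_j = 0`, and the index sets `𝓘, 𝒮` avoid `j`. -/
theorem restricted_eigenvalue_condition_whp
    (p : ℕ → ℕ) (j : ∀ n, Fin (p n))
    (Sg : ∀ n, Matrix (Fin (p n)) (Fin (p n)) ℝ)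
    (hSgSymm : ∀ n, (Sg n).IsSymm)
    (hSgDiag : ∀ n, ∀ k, Sg n k k = 1)
    (Ω : ℕ → Type) [∀ n, MeasureSpace (Ω n)]
    [∀ n, IsProbabilityMeasure (volume : Measure (Ω n))]
    (X : ∀ n, Ω n → Matrix (Fin n) (Fin (p n)) ℝ)
    (hXmeas : ∀ n, Measurable (fun ω (i : Fin n) (k : Fin (p n)) => X n ω i k))
    -- rows of `X` are i.i.d. `N_p(0, Σ)`
    (hGauss : ∀ n (i : Fin n) (a : Fin (p n) → ℝ),
      Measure.map (fun ω => ∑ k, a k * X n ω i k) volume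
        = gaussianReal 0 (Real.toNNReal (a ⬝ᵥ (Sg n).mulVec a)))
    (hRows : ∀ n,
      iIndepFun
        (fun (i : Fin n) (ω : Ω n) (k : Fin (p n)) => X n ω i k) volume)
    -- population regression coefficients `β^j`
    (β : ∀ n, Fin (p n) → ℝ)
    (hβj : ∀ n, β n (j n) = 0)
    (hβreg : ∀ n, ∀ k, k ≠ j n → Sg n k (j n) = (Sg n).mulVec (β n) k)
    -- lasso tuning parameter
    (lam : ℕ → ℝ) (hlam : ∀ n, 0 < lam n)
    -- `q_j = |ne_j| = |supp(β^j)|`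
    (q : ℕ → ℕ) (hq : ∀ n, q n = (Finset.univ.filter fun k => β n k ≠ 0).card)
    (hq1 : ∀ n, 1 ≤ q n)
    -- (A1): `liminf λ_min(Σ) > 0` and `limsup λ_max(Σ) < ∞`
    (hA1lower : ∃ κ > (0 : ℝ), ∀ᶠ n in atTop,
      ∀ a : Fin (p n) → ℝ, κ * ∑ k, (a k) ^ 2 ≤ a ⬝ᵥ (Sg n).mulVec a)
    (hA1upper : ∃ C : ℝ, ∀ᶠ n in atTop,
      ∀ a : Fin (p n) → ℝ, a ⬝ᵥ (Sg n).mulVec a ≤ C * ∑ k, (a k) ^ 2)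
    -- (A2)
    (hA2a : ∃ l : ℝ, ∀ᶠ n in atTop, lam n * q n ≤ l)
    (hA2b : Tendsto (fun n => Real.sqrt (Real.log (p n) / n) * (q n : ℝ) / lam n)
      atTop (nhds 0))
    (hA2c : Tendsto
      (fun n => lam n * Real.sqrt (q n) / sInf {r : ℝ | ∃ k, β n k ≠ 0 ∧ r = |β n k|})
      atTop (nhds 0)) :
    ∃ φ : ℕ → ℝ, (∀ n, 0 < φ n) ∧
      (∃ κ > (0 : ℝ), liminf (fun n => (φ n) ^ 2) atTop = κ ^ 2) ∧
      Tendsto (fun n =>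
        (volume : Measure (Ω n)) {ω |
          ∀ b : Fin (p n) → ℝ, b (j n) = 0 →
            ∀ I : Finset (Fin (p n)), j n ∉ I → I.card ≤ q n →
              (∑ k ∈ Iᶜ, |b k|) ≤ 3 * ∑ k ∈ I, |b k| →
                ∀ S : Finset (Fin (p n)), j n ∉ S → I ⊆ S → S.card ≤ 2 * q n →
                  (∀ k, k ∉ S → ∀ l ∈ S \ I, |b k| ≤ |b l|) →
                    (∑ k ∈ S, (b k) ^ 2) ≤ (1 / (φ n) ^ 2) *
                      (b ⬝ᵥ ((1 / (n : ℝ)) • ((X n ω)ᵀ * X n ω)).mulVec b)})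
        atTop (nhds 1) := by
  classical
  obtain ⟨κ, hκ0, hA1⟩ := hA1lower
  obtain ⟨l, hA2a'⟩ := hA2a
  -- p n ≥ 2
  have hp2 : ∀ n, 2 ≤ p n := by
    intro n
    have hcard : 1 ≤ (Finset.univ.filter fun k => β n k ≠ 0).card := by
      rw [← hq n]; exact hq1 n
    obtain ⟨k, hk⟩ := Finset.card_pos.mp hcard
    rw [Finset.mem_filter] at hk
    have hkj : k ≠ j n := fun h => hk.2 (h ▸ hβj n)
    have : ({k, j n} : Finset (Fin (p n))).card ≤ (Finset.univ : Finset (Fin (p n))).card :=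
      Finset.card_le_univ _
    rwa [Finset.card_insert_of_notMem (by simpa using hkj), Finset.card_singleton,
      Finset.card_univ, Fintype.card_fin] at this
  have hlog2 : (0:ℝ) < Real.log 2 := Real.log_pos (by norm_num)
  have hlogp : ∀ n, Real.log 2 ≤ Real.log (p n) := by
    intro n
    exact Real.log_le_log (by norm_num) (by exact_mod_cast hp2 n)
  have hlogp0 : ∀ n, 0 < Real.log (p n) := fun n => lt_of_lt_of_le hlog2 (hlogp n)
  -- the sequence t
  set t : ℕ → ℝ := fun n => Real.sqrt (Real.sqrt (Real.log (p n) / n)) with htdef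
  have ht0 : ∀ n, 0 ≤ t n := fun n => Real.sqrt_nonneg _
  -- (i) q² √(log p/n) → 0
  have hc : Tendsto (fun n => (q n:ℝ) ^ 2 * Real.sqrt (Real.log (p n) / n)) atTop (nhds 0) := by
    have hupper : ∀ᶠ n in atTop, (q n:ℝ) ^ 2 * Real.sqrt (Real.log (p n) / n)
        ≤ (Real.sqrt (Real.log (p n) / n) * (q n : ℝ) / lam n) * l := by
      filter_upwards [hA2a'] with n hn
      have hl : lam n ≠ 0 := (hlam n).ne'
      have hceq : (q n:ℝ) ^ 2 * Real.sqrt (Real.log (p n) / n)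
          = (Real.sqrt (Real.log (p n) / n) * (q n : ℝ) / lam n) * (lam n * (q n : ℝ)) := by
        rw [div_mul_eq_mul_div, mul_div_assoc, mul_comm (lam n) ((q n : ℝ)), mul_div_assoc,
          div_self hl, mul_one]
        ring
      rw [hceq]
      refine mul_le_mul_of_nonneg_left hn ?_
      have := hlam n
      positivity
    have hlim : Tendsto (fun n => (Real.sqrt (Real.log (p n) / n) * (q n : ℝ) / lam n) * l)
        atTop (nhds 0) := by
      simpa using hA2b.mul_const l
    refine tendsto_of_tendsto_of_tendsto_of_le_of_le' tendsto_const_nhds hlim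
      (Filter.Eventually.of_forall fun n => by positivity) hupper
  -- (ii) q * t → 0
  have hqteq : ∀ n, (q n : ℝ) * t n = Real.sqrt ((q n:ℝ) ^ 2 * Real.sqrt (Real.log (p n) / n)) := by
    intro n
    rw [htdef, Real.sqrt_mul (sq_nonneg _), Real.sqrt_sq (Nat.cast_nonneg (q n))]
  have hqt : Tendsto (fun n => (q n:ℝ) * t n) atTop (nhds 0) := by
    have := hc.sqrt
    rw [Real.sqrt_zero] at this
    exact this.congr fun n => (hqteq n).symm
  -- (iii) t → 0
  have htt : Tendsto t atTop (nhds 0) := by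
    refine tendsto_of_tendsto_of_tendsto_of_le_of_le tendsto_const_nhds hqt
      (fun n => ht0 n) (fun n => ?_)
    calc t n = 1 * t n := (one_mul _).symm
      _ ≤ (q n : ℝ) * t n := by
          refine mul_le_mul_of_nonneg_right ?_ (ht0 n)
          exact_mod_cast hq1 n
  -- (v) δ → 0
  set δ : ℕ → ℝ := fun n => 2 * (p n:ℝ) ^ 2 * Real.exp (-(n:ℝ) * t n ^ 2 / 48) with hδdef
  have hδ0 : ∀ n, 0 ≤ δ n := by
    intro n; rw [hδdef]; positivity
  have hδlim : Tendsto δ atTop (nhds 0) := by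
    -- √(log p / n) → 0
    have hsl0 : Tendsto (fun n => Real.sqrt (Real.log (p n) / n)) atTop (nhds 0) := by
      refine tendsto_of_tendsto_of_tendsto_of_le_of_le tendsto_const_nhds hc
        (fun n => Real.sqrt_nonneg _) (fun n => ?_)
      have h1 : (1:ℝ) ≤ (q n:ℝ) ^ 2 := by
        have : (1:ℝ) ≤ (q n:ℝ) := by exact_mod_cast hq1 n
        nlinarith
      nlinarith [Real.sqrt_nonneg (Real.log (p n) / n), h1]
    -- √(n / log p) → ∞
    have hinv : Tendsto (fun (n:ℕ) => Real.sqrt ((n:ℝ) / Real.log (p n))) atTop atTop := by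
      have hsl0' : Tendsto (fun n => Real.sqrt (Real.log (p n) / n)) atTop
          (nhdsWithin 0 (Set.Ioi 0)) := by
        refine tendsto_nhdsWithin_iff.mpr ⟨hsl0, ?_⟩
        filter_upwards [eventually_ge_atTop 1] with n hn
        have hn0 : (0:ℝ) < (n:ℝ) := by exact_mod_cast hn
        exact Real.sqrt_pos.mpr (div_pos (hlogp0 n) hn0)
      have := hsl0'.inv_tendsto_nhdsGT_zero
      refine this.congr' ?_
      filter_upwards [eventually_ge_atTop 1] with n hn
      simp only [Pi.inv_apply]
      rw [← Real.sqrt_inv, inv_div]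
    -- the exponent tends to -∞
    have he : Tendsto (fun n => 2 * Real.log (p n) - (n:ℝ) * t n ^ 2 / 48) atTop atBot := by
      have hB : Tendsto (fun (n:ℕ) => Real.log 2 * (2 - Real.sqrt ((n:ℝ) / Real.log (p n)) / 48))
          atTop atBot := by
        have h1 : Tendsto (fun (n:ℕ) => Real.sqrt ((n:ℝ) / Real.log (p n)) / 48) atTop atTop :=
          hinv.atTop_div_const (by norm_num)
        have h2 : Tendsto (fun (n:ℕ) => 2 - Real.sqrt ((n:ℝ) / Real.log (p n)) / 48) atTop atBot := by
          have := tendsto_neg_atTop_atBot.comp h1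
          have h3 := tendsto_atBot_add_const_left atTop (2:ℝ) this
          refine h3.congr fun n => ?_
          simp [sub_eq_add_neg]
        exact h2.const_mul_atBot hlog2
      refine tendsto_atBot_mono' atTop ?_ hB
      filter_upwards [eventually_ge_atTop 1, hinv.eventually_ge_atTop 96] with n hn1 hn96
      have hL : (0:ℝ) < Real.log (p n) := hlogp0 n
      have hn0 : (0:ℝ) < (n:ℝ) := by exact_mod_cast hn1
      have htsq : t n ^ 2 = Real.sqrt (Real.log (p n) / n) := by
        rw [htdef]
        exact Real.sq_sqrt (Real.sqrt_nonneg _)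
      have hnt : (n:ℝ) * t n ^ 2 = Real.log (p n) * Real.sqrt ((n:ℝ) / Real.log (p n)) := by
        rw [htsq]
        have e1 : (n:ℝ) * Real.sqrt (Real.log (p n) / n)
            = Real.sqrt ((n:ℝ)^2 * (Real.log (p n) / n)) := by
          rw [Real.sqrt_mul (sq_nonneg _), Real.sqrt_sq hn0.le]
        have e2 : Real.log (p n) * Real.sqrt ((n:ℝ) / Real.log (p n))
            = Real.sqrt ((Real.log (p n))^2 * ((n:ℝ) / Real.log (p n))) := by
          rw [Real.sqrt_mul (sq_nonneg _), Real.sqrt_sq hL.le]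
        rw [e1, e2]
        congr 1
        field_simp
      have hx0 : 2 - Real.sqrt ((n:ℝ) / Real.log (p n)) / 48 ≤ 0 := by linarith
      have := mul_le_mul_of_nonpos_right (hlogp n) hx0
      calc 2 * Real.log (p n) - (n:ℝ) * t n ^ 2 / 48
          = Real.log (p n) * (2 - Real.sqrt ((n:ℝ) / Real.log (p n)) / 48) := by
            rw [hnt]; ring
        _ ≤ Real.log 2 * (2 - Real.sqrt ((n:ℝ) / Real.log (p n)) / 48) := this
    have hfin : Tendsto (fun n => 2 * Real.exp (2 * Real.log (p n) - (n:ℝ) * t n ^ 2 / 48))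
        atTop (nhds 0) := by
      have h2 := Real.tendsto_exp_atBot.comp he
      have := h2.const_mul (2:ℝ)
      simpa using this
    refine hfin.congr fun n => ?_
    have hp0 : (0:ℝ) < (p n:ℝ) := by
      have := hp2 n
      exact_mod_cast Nat.lt_of_lt_of_le (by norm_num) this
    have hpexp : Real.exp (2 * Real.log (p n)) = (p n:ℝ)^2 := by
      rw [two_mul, Real.exp_add, Real.exp_log hp0, sq]
    have harg : -(n:ℝ) * t n ^ 2 / 48 = -((n:ℝ) * t n ^ 2 / 48) := by ring
    simp only [hδdef]
    rw [harg, sub_eq_add_neg, Real.exp_add, hpexp]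
    ring
  -- choose φ
  refine ⟨fun _ => Real.sqrt (κ/2), fun n => Real.sqrt_pos.mpr (by linarith), ?_, ?_⟩
  · exact ⟨Real.sqrt (κ/2), Real.sqrt_pos.mpr (by linarith), liminf_const _⟩
  -- eventual facts
  have htpos : ∀ᶠ n in atTop, 0 < t n := by
    filter_upwards [eventually_ge_atTop 1] with n hn
    have hn0 : (0:ℝ) < (n:ℝ) := by exact_mod_cast hn
    exact Real.sqrt_pos.mpr (Real.sqrt_pos.mpr (div_pos (hlogp0 n) hn0))
  have ht3 : ∀ᶠ n in atTop, t n ≤ 3 :=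
    htt.eventually (eventually_le_nhds (show (0:ℝ) < 3 by norm_num))
  have h16 : ∀ᶠ n in atTop, 16 * (q n:ℝ) * t n ≤ κ/2 := by
    filter_upwards [hqt.eventually (eventually_le_nhds (show (0:ℝ) < κ/32 by linarith))]
      with n hn
    linarith
  have hmain : ∀ᶠ n in atTop,
      ENNReal.ofReal (1 - δ n) ≤ (volume : Measure (Ω n)) {ω |
          ∀ b : Fin (p n) → ℝ, b (j n) = 0 →
            ∀ I : Finset (Fin (p n)), j n ∉ I → I.card ≤ q n →
              (∑ k ∈ Iᶜ, |b k|) ≤ 3 * ∑ k ∈ I, |b k| →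
                ∀ S : Finset (Fin (p n)), j n ∉ S → I ⊆ S → S.card ≤ 2 * q n →
                  (∀ k, k ∉ S → ∀ l ∈ S \ I, |b k| ≤ |b l|) →
                    (∑ k ∈ S, (b k) ^ 2) ≤ (1 / (Real.sqrt (κ/2)) ^ 2) *
                      (b ⬝ᵥ ((1 / (n : ℝ)) • ((X n ω)ᵀ * X n ω)).mulVec b)} := by
    filter_upwards [eventually_ge_atTop 1, htpos, ht3, h16, hA1] with n hn1 htp ht3' h16' hA1n
    have hn0 : (0:ℝ) < (n:ℝ) := by exact_mod_cast hn1
    set E : Set (Ω n) := {ω | ∀ k l' : Fin (p n),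
      |(1/(n:ℝ)) * (∑ i, X n ω i k * X n ω i l') - Sg n k l'| ≤ t n} with hE
    have hsub : E ⊆ {ω |
          ∀ b : Fin (p n) → ℝ, b (j n) = 0 →
            ∀ I : Finset (Fin (p n)), j n ∉ I → I.card ≤ q n →
              (∑ k ∈ Iᶜ, |b k|) ≤ 3 * ∑ k ∈ I, |b k| →
                ∀ S : Finset (Fin (p n)), j n ∉ S → I ⊆ S → S.card ≤ 2 * q n →
                  (∀ k, k ∉ S → ∀ l ∈ S \ I, |b k| ≤ |b l|) →
                    (∑ k ∈ S, (b k) ^ 2) ≤ (1 / (Real.sqrt (κ/2)) ^ 2) *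
                      (b ⬝ᵥ ((1 / (n : ℝ)) • ((X n ω)ᵀ * X n ω)).mulVec b)} := by
      intro ω hω b hbj I hjI hIcard hcone S hjS hIS hScard hmax
      have hphi : (Real.sqrt (κ/2)) ^ 2 = κ/2 := Real.sq_sqrt (by linarith)
      rw [hphi]
      have hent : ∀ k l', |((1/(n:ℝ)) • ((X n ω)ᵀ * X n ω)) k l' - Sg n k l'| ≤ t n := by
        intro k l'
        have hentry : ((1/(n:ℝ)) • ((X n ω)ᵀ * X n ω)) k l'
            = (1/(n:ℝ)) * ∑ i, X n ω i k * X n ω i l' := by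
          simp [Matrix.smul_apply, Matrix.mul_apply, Matrix.transpose_apply, smul_eq_mul]
        rw [hentry]
        exact hω k l'
      exact det_re (Sg n) _ hκ0 hA1n hent (ht0 n) h16' b I hIcard hcone S
    have hXik : ∀ (i : Fin n) (k : Fin (p n)), Measurable fun ω => X n ω i k := fun i k =>
      (measurable_pi_apply k).comp ((measurable_pi_apply i).comp (hXmeas n))
    have hpos : ∀ a : Fin (p n) → ℝ, 0 ≤ a ⬝ᵥ (Sg n).mulVec a := fun a =>
      le_trans (by positivity) (hA1n a)
    have hcher : ∀ (k l' : Fin (p n)) (u : ℝ), u = 1 ∨ u = -1 →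
        (volume : Measure (Ω n)) {ω | (n:ℝ) * t n
            ≤ ∑ i : Fin n, (u * (X n ω i k * X n ω i l') - u * Sg n k l')}
          ≤ ENNReal.ofReal (Real.exp (-(n:ℝ) * t n ^ 2 / 48)) := by
      intro k l' u hu
      refine (ENNReal.le_ofReal_iff_toReal_le (measure_ne_top _ _) (Real.exp_pos _).le).mpr ?_
      exact chernoff_entry (X n) hXik (Sg n) (hSgSymm n) (hSgDiag n) hpos (hGauss n) (hRows n)
        k l' u hu htp ht3'
    set Bp : Fin (p n) × Fin (p n) → Set (Ω n) := fun kl => {ω | (n:ℝ) * t n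
        ≤ ∑ i : Fin n, ((1:ℝ) * (X n ω i kl.1 * X n ω i kl.2) - 1 * Sg n kl.1 kl.2)} with hBp
    set Bm : Fin (p n) × Fin (p n) → Set (Ω n) := fun kl => {ω | (n:ℝ) * t n
        ≤ ∑ i : Fin n, ((-1:ℝ) * (X n ω i kl.1 * X n ω i kl.2) - (-1) * Sg n kl.1 kl.2)} with hBm
    have hincl : Eᶜ ⊆ ⋃ kl : Fin (p n) × Fin (p n), (Bp kl ∪ Bm kl) := by
      intro ω hω
      simp only [hE, Set.mem_compl_iff, Set.mem_setOf_eq, not_forall] at hω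
      obtain ⟨k, l', hkl⟩ := hω
      rw [not_le] at hkl
      refine Set.mem_iUnion.mpr ⟨(k, l'), ?_⟩
      have hsum1 : ∀ u : ℝ, (∑ i : Fin n, (u * (X n ω i k * X n ω i l') - u * Sg n k l'))
          = (n:ℝ) * (u * ((1/(n:ℝ)) * (∑ i, X n ω i k * X n ω i l') - Sg n k l')) := by
        intro u
        rw [Finset.sum_sub_distrib, Finset.sum_const, Finset.card_univ, Fintype.card_fin,
          nsmul_eq_mul, ← Finset.mul_sum]
        field_simp
      rcases lt_abs.mp hkl with h | h
      · left
        simp only [hBp, Set.mem_setOf_eq]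
        rw [hsum1 1]
        refine mul_le_mul_of_nonneg_left ?_ hn0.le
        rw [one_mul]
        exact h.le
      · right
        simp only [hBm, Set.mem_setOf_eq]
        rw [hsum1 (-1)]
        refine mul_le_mul_of_nonneg_left ?_ hn0.le
        rw [neg_one_mul]
        exact h.le
    have hEc : (volume : Measure (Ω n)) Eᶜ ≤ ENNReal.ofReal (δ n) := by
      calc (volume : Measure (Ω n)) Eᶜ
          ≤ ∑' kl : Fin (p n) × Fin (p n), (volume : Measure (Ω n)) (Bp kl ∪ Bm kl) :=
            (measure_mono hincl).trans (measure_iUnion_le _)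
        _ ≤ ∑' _kl : Fin (p n) × Fin (p n),
              (ENNReal.ofReal (Real.exp (-(n:ℝ) * t n ^ 2 / 48))
                + ENNReal.ofReal (Real.exp (-(n:ℝ) * t n ^ 2 / 48))) := by
            refine ENNReal.tsum_le_tsum fun kl => ?_
            refine (measure_union_le _ _).trans (add_le_add ?_ ?_)
            · exact hcher kl.1 kl.2 1 (Or.inl rfl)
            · exact hcher kl.1 kl.2 (-1) (Or.inr rfl)
        _ = ENNReal.ofReal (δ n) := by
            rw [tsum_fintype, Finset.sum_const, Finset.card_univ, Fintype.card_prod,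
              Fintype.card_fin, nsmul_eq_mul,
              ← ENNReal.ofReal_add (Real.exp_pos _).le (Real.exp_pos _).le,
              ← ENNReal.ofReal_natCast, ← ENNReal.ofReal_mul (Nat.cast_nonneg _)]
            congr 1
            simp only [hδdef]
            push_cast
            ring
    refine le_trans ?_ (measure_mono hsub)
    have h1E : (1:ℝ≥0∞) ≤ (volume : Measure (Ω n)) E + (volume : Measure (Ω n)) Eᶜ := by
      have hu : (volume : Measure (Ω n)) (E ∪ Eᶜ) = 1 := by
        rw [Set.union_compl_self]
        exact measure_univ
      rw [← hu]
      exact measure_union_le E Eᶜ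
    calc ENNReal.ofReal (1 - δ n) = 1 - ENNReal.ofReal (δ n) := by
          rw [ENNReal.ofReal_sub _ (hδ0 n), ENNReal.ofReal_one]
      _ ≤ 1 - (volume : Measure (Ω n)) Eᶜ := tsub_le_tsub_left hEc 1
      _ ≤ (volume : Measure (Ω n)) E := tsub_le_iff_right.mpr h1E
  have hlower : Tendsto (fun n => ENNReal.ofReal (1 - δ n)) atTop (nhds 1) := by
    have h1 : Tendsto (fun n => 1 - δ n) atTop (nhds 1) := by
      have := (tendsto_const_nhds (x := (1:ℝ)) (f := atTop)).sub hδlim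
      simpa using this
    have := ENNReal.tendsto_ofReal h1
    simpa using this
  exact tendsto_of_tendsto_of_tendsto_of_le_of_le' hlower tendsto_const_nhds hmain
    (Filter.Eventually.of_forall fun n => prob_le_one)
end

section
/- Lower bound for the perturbed lasso objective (eq:taylor3). Let n ≥ 1, x ∈ ℝ^n, X ∈ ℝ^{n×p}, β̃, w, τ ∈ ℝ^p, λ ≥ 0, c ≥ 0, and δ ∈ ℝ. Define Q(b) := (1/(2n))‖x − Xb‖₂² + λ‖b‖₁ and S := supp(β̃). Suppose τ_k = sign(β̃_k) for every k ∈ S and |τ_k| ≤ 1 − δ/2 for every k ∉ S. Then Q(β̃ + c·w) − Q(β̃) ≥ −(c/n)·⟨w, X⊤(x − Xβ̃) − λ n τ⟩ + (c²/(2n))·‖Xw‖₂² + λ·c·(δ/2)·Σ_{k∉S}|w_k|. -/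
open Matrix

/-- The lasso objective `Q(b) = (1/(2n))‖x − Xb‖₂² + λ‖b‖₁`. -/
noncomputable def lassoObjective (n p : ℕ) (x : Fin n → ℝ)
    (X : Matrix (Fin n) (Fin p) ℝ) (lam : ℝ) (b : Fin p → ℝ) : ℝ :=
  (1 / (2 * (n : ℝ))) * (∑ i, (x i - X.mulVec b i) ^ 2) + lam * ∑ k, |b k|

/-- Lower bound for the perturbed lasso objective (eq:taylor3): if `τ_k = sign(β̃_k)` on
the support `S` of `β̃`, and `|τ_k| ≤ 1 − δ/2` off the support, then
`Q(β̃ + c·w) − Q(β̃) ≥ −(c/n)⟨w, X⊤(x − Xβ̃) − λnτ⟩ + (c²/(2n))‖Xw‖₂²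
  + λc(δ/2)Σ_{k∉S}|w_k|`. -/
theorem perturbed_lasso_objective_lower_bound (n p : ℕ) (hn : 1 ≤ n)
    (x : Fin n → ℝ) (X : Matrix (Fin n) (Fin p) ℝ)
    (βt w τ : Fin p → ℝ) (lam c δ : ℝ) (hlam : 0 ≤ lam) (hc : 0 ≤ c)
    (hτsupp : ∀ k, βt k ≠ 0 → τ k = if 0 < βt k then (1 : ℝ) else -1)
    (hτoff : ∀ k, βt k = 0 → |τ k| ≤ 1 - δ / 2) :
    lassoObjective n p x X lam (βt + c • w) - lassoObjective n p x X lam βt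
      ≥ -(c / (n : ℝ)) *
          (∑ k, w k * (Xᵀ.mulVec (x - X.mulVec βt) - (lam * (n : ℝ)) • τ) k)
        + (c ^ 2 / (2 * (n : ℝ))) * (∑ i, (X.mulVec w i) ^ 2)
        + lam * c * (δ / 2) * ∑ k ∈ Finset.univ.filter fun k => βt k = 0, |w k| := by
  have hn0 : (0:ℝ) < (n:ℝ) := by exact_mod_cast hn
  set r : Fin n → ℝ := fun i => x i - X.mulVec βt i with hr
  set A : ℝ := ∑ i, r i * X.mulVec w i with hA
  set B : ℝ := ∑ i, (X.mulVec w i) ^ 2 with hB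
  set T : ℝ := ∑ k, w k * τ k with hT
  set F : ℝ := ∑ k ∈ Finset.univ.filter fun k => βt k = 0, |w k| with hF
  have hmv : ∀ i, X.mulVec (βt + c • w) i = X.mulVec βt i + c * X.mulVec w i := by
    intro i
    simp [Matrix.mulVec_add, Matrix.mulVec_smul]
  -- quadratic part
  have key1 : ∑ i, (x i - X.mulVec (βt + c • w) i) ^ 2
      = ∑ i, (x i - X.mulVec βt i) ^ 2 - 2 * c * A + c ^ 2 * B := by
    have h : ∀ i ∈ Finset.univ, (x i - X.mulVec (βt + c • w) i) ^ 2
        = (x i - X.mulVec βt i) ^ 2 - 2 * c * (r i * X.mulVec w i)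
          + c ^ 2 * (X.mulVec w i) ^ 2 := by
      intro i _
      rw [hmv i]
      simp only [hr]
      ring
    rw [Finset.sum_congr rfl h, Finset.sum_add_distrib, Finset.sum_sub_distrib,
      ← Finset.mul_sum, ← Finset.mul_sum, hA, hB]
  -- inner product rewriting
  have key2 : ∑ k, w k * (Xᵀ.mulVec (x - X.mulVec βt) - (lam * (n : ℝ)) • τ) k
      = A - lam * (n : ℝ) * T := by
    have h1 : ∑ k, w k * (Xᵀ.mulVec (x - X.mulVec βt)) k = A := by
      simp only [hA, hr, Matrix.mulVec, dotProduct, Matrix.transpose_apply,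
        Finset.mul_sum, Pi.sub_apply]
      rw [Finset.sum_comm]
      exact Finset.sum_congr rfl fun i _ => Finset.sum_congr rfl fun k _ => by ring
    calc ∑ k, w k * (Xᵀ.mulVec (x - X.mulVec βt) - (lam * (n : ℝ)) • τ) k
        = ∑ k, (w k * (Xᵀ.mulVec (x - X.mulVec βt)) k
            - lam * (n : ℝ) * (w k * τ k)) := by
          apply Finset.sum_congr rfl
          intro k _
          simp [Pi.sub_apply, Pi.smul_apply, smul_eq_mul]
          ring
      _ = A - lam * (n : ℝ) * T := by
          rw [Finset.sum_sub_distrib, h1, ← Finset.mul_sum, hT]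
  -- ℓ1 part
  have habs : ∀ k ∈ Finset.univ,
      c * (w k * τ k) + c * (δ / 2) * (if βt k = 0 then |w k| else 0)
        ≤ |(βt + c • w) k| - |βt k| := by
    intro k _
    have hval : (βt + c • w) k = βt k + c * w k := by
      simp [Pi.add_apply, Pi.smul_apply, smul_eq_mul]
    rw [hval]
    by_cases h : βt k = 0
    · simp only [h, if_pos, abs_zero, zero_add, sub_zero]
      have hτ := hτoff k h
      have h1 : w k * τ k ≤ |w k| * (1 - δ / 2) := by
        calc w k * τ k ≤ |w k * τ k| := le_abs_self _
          _ = |w k| * |τ k| := abs_mul _ _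
          _ ≤ |w k| * (1 - δ / 2) := mul_le_mul_of_nonneg_left hτ (abs_nonneg _)
      have h2 : |c * w k| = c * |w k| := by
        rw [abs_mul, abs_of_nonneg hc]
      rw [h2]
      nlinarith [abs_nonneg (w k), mul_le_mul_of_nonneg_left h1 hc]
    · rw [if_neg h]
      have hτk := hτsupp k h
      by_cases hp : 0 < βt k
      · rw [hτk, if_pos hp]
        have h1 : βt k + c * w k ≤ |βt k + c * w k| := le_abs_self _
        have h2 : |βt k| = βt k := abs_of_pos hp
        linarith
      · have hneg : βt k < 0 := lt_of_le_of_ne (not_lt.mp hp) h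
        rw [hτk, if_neg hp]
        have h1 : -(βt k + c * w k) ≤ |βt k + c * w k| := neg_le_abs _
        have h2 : |βt k| = -βt k := abs_of_neg hneg
        linarith
  have hl1 : c * T + c * (δ / 2) * F ≤ ∑ k, |(βt + c • w) k| - ∑ k, |βt k| := by
    have h := Finset.sum_le_sum habs
    rw [Finset.sum_add_distrib, ← Finset.mul_sum, ← Finset.mul_sum,
      ← Finset.sum_filter, Finset.sum_sub_distrib] at h
    exact h
  have hne : (n:ℝ) ≠ 0 := ne_of_gt hn0
  have hl2 : lam * c * T + lam * c * (δ / 2) * F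
      ≤ lam * ∑ k, |(βt + c • w) k| - lam * ∑ k, |βt k| := by
    calc lam * c * T + lam * c * (δ / 2) * F
        = lam * (c * T + c * (δ / 2) * F) := by ring
      _ ≤ lam * (∑ k, |(βt + c • w) k| - ∑ k, |βt k|) :=
          mul_le_mul_of_nonneg_left hl1 hlam
      _ = lam * ∑ k, |(βt + c • w) k| - lam * ∑ k, |βt k| := by ring
  simp only [lassoObjective, key1, key2]
  have key3 : (1:ℝ)/(2*(n:ℝ)) * ((∑ i, (x i - X.mulVec βt i)^2) - 2*c*A + c^2*B)
      - 1/(2*(n:ℝ)) * (∑ i, (x i - X.mulVec βt i)^2)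
      = -(c/(n:ℝ))*A + c^2/(2*(n:ℝ))*B := by
    field_simp
    ring
  have key4 : -(c/(n:ℝ))*(A - lam*(n:ℝ)*T) = -(c/(n:ℝ))*A + lam*c*T := by
    field_simp
    ring
  linarith [hl2, key3, key4]
end
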